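/- For every δ ≥ 0, let T_δ be the spanning subgraph of G whose edges are the negative edges e with pers(e) ≤ δ. Then every connected component C of T_δ contains exactly one vertex that is either unpaired or paired with persistence strictly greater than δ, namely the vertex of C minimizing f (the 'sink' of C). -/
import Mathlib


open SimpleGraph

/-- The function value of an edge: the larger of the values of its two endpoints. -/
noncomputable def fbar {V : Type*} (f : V → ℝ) : Sym2 V → ℝ :=
  Sym2.lift ⟨fun u w => max (f u) (f w), fun u w => max_comm (f u) (f w)⟩

/-- The spanning subgraph `G_{≺e}` of `G` whose edges are exactly the edges `e'` of `G`
with `e' ≺ e`. -/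
def Gbelow {V : Type*} (G : SimpleGraph V) (lt : Sym2 V → Sym2 V → Prop) (e : Sym2 V) :
    SimpleGraph V :=
  SimpleGraph.fromEdgeSet {e' | e' ∈ G.edgeSet ∧ lt e' e}

/-- An edge `e` of `G` is negative if its two endpoints lie in different connected
components of `G_{≺e}`. -/
def IsNegEdge {V : Type*} (G : SimpleGraph V) (lt : Sym2 V → Sym2 V → Prop) (e : Sym2 V) :
    Prop :=
  e ∈ G.edgeSet ∧ ∃ u w : V, e = s(u, w) ∧ ¬ (Gbelow G lt e).Reachable u w

/-- An edge `e` of `G` is positive if it is not negative. -/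
def IsPosEdge {V : Type*} (G : SimpleGraph V) (lt : Sym2 V → Sym2 V → Prop) (e : Sym2 V) :
    Prop :=
  e ∈ G.edgeSet ∧ ¬ IsNegEdge G lt e

/-- The `f`-minimizing vertex of the connected component of `u` in the graph `H`. -/
noncomputable def compMin {V : Type*} [Fintype V] (f : V → ℝ) (H : SimpleGraph V) (u : V) :
    V := by
  classical
  exact Classical.choose (Finset.exists_min_image
    (Finset.univ.filter fun v => H.Reachable u v) f
    ⟨u, Finset.mem_filter.mpr ⟨Finset.mem_univ u, SimpleGraph.Reachable.refl u⟩⟩)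

/-- The vertex `m(e)` paired with a negative edge `e` by the elder rule: of the two
`f`-minimizing vertices of the components (in `G_{≺e}`) of the endpoints of `e`, the one
with the larger `f`-value. -/
noncomputable def pairVert {V : Type*} [Fintype V] (G : SimpleGraph V) (f : V → ℝ)
    (hf : Function.Injective f) (lt : Sym2 V → Sym2 V → Prop) (e : Sym2 V) : V :=
  Sym2.lift ⟨fun u w =>
      if f (compMin f (Gbelow G lt e) u) < f (compMin f (Gbelow G lt e) w)
      then compMin f (Gbelow G lt e) w
      else compMin f (Gbelow G lt e) u, by
    intro u w
    dsimp only
    rcases lt_trichotomy (f (compMin f (Gbelow G lt e) u)) (f (compMin f (Gbelow G lt e) w))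
      with h | h | h
    · rw [if_pos h, if_neg (lt_asymm h)]
    · rw [hf h]
    · rw [if_neg (lt_asymm h), if_pos h]⟩ e

/-- The persistence of a negative edge `e`: `f̄(e) - f(m(e))`. -/
noncomputable def persE {V : Type*} [Fintype V] (G : SimpleGraph V) (f : V → ℝ)
    (hf : Function.Injective f) (lt : Sym2 V → Sym2 V → Prop) (e : Sym2 V) : ℝ :=
  fbar f e - f (pairVert G f hf lt e)

section Helpers

variable {V : Type*} [Fintype V]

lemma compMin_spec (f : V → ℝ) (H : SimpleGraph V) (u : V) :
    H.Reachable u (compMin f H u) ∧ ∀ v, H.Reachable u v → f (compMin f H u) ≤ f v := by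
  classical
  unfold compMin
  have h := Classical.choose_spec (Finset.exists_min_image
    (Finset.univ.filter fun v => H.Reachable u v) f
    ⟨u, Finset.mem_filter.mpr ⟨Finset.mem_univ u, SimpleGraph.Reachable.refl u⟩⟩)
  refine ⟨(Finset.mem_filter.mp h.1).2, fun v hv => h.2 v ?_⟩
  exact Finset.mem_filter.mpr ⟨Finset.mem_univ v, hv⟩

lemma compMin_reachable (f : V → ℝ) (H : SimpleGraph V) (u : V) :
    H.Reachable u (compMin f H u) := (compMin_spec f H u).1

lemma compMin_le (f : V → ℝ) (H : SimpleGraph V) {u v : V} (h : H.Reachable u v) :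
    f (compMin f H u) ≤ f v := (compMin_spec f H u).2 v h

lemma compMin_congr {f : V → ℝ} (hf : Function.Injective f) {H : SimpleGraph V} {u v : V}
    (h : H.Reachable u v) : compMin f H u = compMin f H v := by
  apply hf
  apply le_antisymm
  · exact compMin_le f H (h.trans (compMin_reachable f H v))
  · exact compMin_le f H (h.symm.trans (compMin_reachable f H u))

lemma reachable_sup_edge {H : SimpleGraph V} {a b x y : V}
    (h : (H ⊔ SimpleGraph.edge a b).Reachable x y) :
    H.Reachable x y ∨ (H.Reachable x a ∧ H.Reachable b y) ∨
      (H.Reachable x b ∧ H.Reachable a y) := by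
  obtain ⟨p⟩ := h
  induction p with
  | nil => exact Or.inl (Reachable.refl _)
  | @cons u v w hadj p ih =>
    rcases (sup_adj _ _ _ _).mp hadj with h1 | h2
    · rcases ih with h | ⟨ha, hb⟩ | ⟨ha, hb⟩
      · exact Or.inl (h1.reachable.trans h)
      · exact Or.inr (Or.inl ⟨h1.reachable.trans ha, hb⟩)
      · exact Or.inr (Or.inr ⟨h1.reachable.trans ha, hb⟩)
    · rw [edge_adj] at h2
      rcases h2.1 with ⟨rfl, rfl⟩ | ⟨rfl, rfl⟩
      · rcases ih with h | ⟨ha, hb⟩ | ⟨ha, hb⟩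
        · exact Or.inr (Or.inl ⟨Reachable.refl _, h⟩)
        · exact Or.inr (Or.inl ⟨Reachable.refl _, hb⟩)
        · exact Or.inl hb
      · rcases ih with h | ⟨ha, hb⟩ | ⟨ha, hb⟩
        · exact Or.inr (Or.inr ⟨Reachable.refl _, h⟩)
        · exact Or.inl hb
        · exact Or.inr (Or.inr ⟨Reachable.refl _, hb⟩)

variable {G : SimpleGraph V} {lt : Sym2 V → Sym2 V → Prop}

lemma exists_rel_max
    (hlt_total : ∀ e₁ ∈ G.edgeSet, ∀ e₂ ∈ G.edgeSet, e₁ ≠ e₂ → lt e₁ e₂ ∨ lt e₂ e₁)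
    (hlt_trans : ∀ e₁ ∈ G.edgeSet, ∀ e₂ ∈ G.edgeSet, ∀ e₃ ∈ G.edgeSet,
      lt e₁ e₂ → lt e₂ e₃ → lt e₁ e₃)
    (s : Finset (Sym2 V)) (hs : ∀ e ∈ s, e ∈ G.edgeSet) (hne : s.Nonempty) :
    ∃ m ∈ s, ∀ e ∈ s, e ≠ m → lt e m := by
  classical
  induction s using Finset.cons_induction with
  | empty => exact absurd hne (by simp)
  | cons a s ha ih =>
    rcases s.eq_empty_or_nonempty with rfl | hsne
    · exact ⟨a, by simp, by simp⟩
    · obtain ⟨m, hm, hmax⟩ := ih (fun e he => hs e (Finset.mem_cons_of_mem he)) hsne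
      have ham : a ≠ m := fun h => ha (h ▸ hm)
      have haE := hs a (Finset.mem_cons_self a s)
      have hmE := hs m (Finset.mem_cons_of_mem hm)
      rcases hlt_total a haE m hmE ham with h | h
      · refine ⟨m, Finset.mem_cons_of_mem hm, fun e he hem => ?_⟩
        rcases Finset.mem_cons.mp he with rfl | he'
        · exact h
        · exact hmax e he' hem
      · refine ⟨a, Finset.mem_cons_self a s, fun e he hea => ?_⟩
        rcases Finset.mem_cons.mp he with rfl | he'
        · exact absurd rfl hea
        · rcases eq_or_ne e m with rfl | hem
          · exact h
          · exact hlt_trans e (hs e he) m hmE a haE (hmax e he' hem) h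

lemma exists_rel_min
    (hlt_total : ∀ e₁ ∈ G.edgeSet, ∀ e₂ ∈ G.edgeSet, e₁ ≠ e₂ → lt e₁ e₂ ∨ lt e₂ e₁)
    (hlt_trans : ∀ e₁ ∈ G.edgeSet, ∀ e₂ ∈ G.edgeSet, ∀ e₃ ∈ G.edgeSet,
      lt e₁ e₂ → lt e₂ e₃ → lt e₁ e₃)
    (s : Finset (Sym2 V)) (hs : ∀ e ∈ s, e ∈ G.edgeSet) (hne : s.Nonempty) :
    ∃ m ∈ s, ∀ e ∈ s, e ≠ m → lt m e := by
  classical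
  induction s using Finset.cons_induction with
  | empty => exact absurd hne (by simp)
  | cons a s ha ih =>
    rcases s.eq_empty_or_nonempty with rfl | hsne
    · exact ⟨a, by simp, by simp⟩
    · obtain ⟨m, hm, hmin⟩ := ih (fun e he => hs e (Finset.mem_cons_of_mem he)) hsne
      have ham : a ≠ m := fun h => ha (h ▸ hm)
      have haE := hs a (Finset.mem_cons_self a s)
      have hmE := hs m (Finset.mem_cons_of_mem hm)
      rcases hlt_total a haE m hmE ham with h | h
      · refine ⟨a, Finset.mem_cons_self a s, fun e he hea => ?_⟩
        rcases Finset.mem_cons.mp he with rfl | he'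
        · exact absurd rfl hea
        · rcases eq_or_ne e m with rfl | hem
          · exact h
          · exact hlt_trans a haE m hmE e (hs e he) h (hmin e he' hem)
      · refine ⟨m, Finset.mem_cons_of_mem hm, fun e he hem => ?_⟩
        rcases Finset.mem_cons.mp he with rfl | he'
        · exact h
        · exact hmin e he' hem

end Helpers
set_option maxHeartbeats 1000000 in
lemma claimG_aux {V : Type*} [Fintype V] {G : SimpleGraph V} {f : V → ℝ}
    (hf : Function.Injective f) {lt : Sym2 V → Sym2 V → Prop}
    (hlt_irrefl : ∀ e ∈ G.edgeSet, ¬ lt e e)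
    (hlt_trans : ∀ e₁ ∈ G.edgeSet, ∀ e₂ ∈ G.edgeSet, ∀ e₃ ∈ G.edgeSet,
      lt e₁ e₂ → lt e₂ e₃ → lt e₁ e₃)
    (hlt_total : ∀ e₁ ∈ G.edgeSet, ∀ e₂ ∈ G.edgeSet, e₁ ≠ e₂ → lt e₁ e₂ ∨ lt e₂ e₁) :
    ∀ (n : ℕ) (E : Finset (Sym2 V)), E.card = n →
      (∀ e ∈ E, e ∈ G.edgeSet) →
      (∀ e' ∈ E, ∀ e'' ∈ G.edgeSet, lt e'' e' → e'' ∈ E) →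
      ∀ x : V,
      (SimpleGraph.fromEdgeSet {e' | e' ∈ E ∧ IsNegEdge G lt e' ∧
          f (compMin f (SimpleGraph.fromEdgeSet ↑E) x) < f (pairVert G f hf lt e')}).Reachable
        x (compMin f (SimpleGraph.fromEdgeSet ↑E) x) := by
  classical
  intro n
  induction n using Nat.strong_induction_on with
  | _ n ih =>
  intro E hcard hsub hdc x
  rcases E.eq_empty_or_nonempty with rfl | hEne
  · rw [show ((∅ : Finset (Sym2 V)) : Set (Sym2 V)) = (∅ : Set (Sym2 V)) from Finset.coe_empty,
      SimpleGraph.fromEdgeSet_empty]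
    have hm : compMin f (⊥ : SimpleGraph V) x = x :=
      (SimpleGraph.reachable_bot.mp (compMin_reachable f ⊥ x)).symm
    rw [hm]
  · obtain ⟨e₁, he₁, hmax⟩ := exists_rel_max hlt_total hlt_trans E hsub hEne
    obtain ⟨a, b, hab⟩ : ∃ a b, e₁ = s(a, b) := Sym2.ind (fun a b => ⟨a, b, rfl⟩) e₁
    have hsub' : ∀ e ∈ E.erase e₁, e ∈ G.edgeSet := fun e he =>
      hsub e (Finset.mem_of_mem_erase he)
    have hdc' : ∀ e' ∈ E.erase e₁, ∀ e'' ∈ G.edgeSet, lt e'' e' → e'' ∈ E.erase e₁ := by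
      intro e' he' e'' he''G hlt'
      have he'E := Finset.mem_of_mem_erase he'
      have hmem : e'' ∈ E := hdc e' he'E e'' he''G hlt'
      refine Finset.mem_erase.mpr ⟨?_, hmem⟩
      rintro rfl
      exact hlt_irrefl _ (hsub _ hmem)
        (hlt_trans _ (hsub _ hmem) e' (hsub _ he'E) _ (hsub _ hmem) hlt'
          (hmax e' he'E (Finset.ne_of_mem_erase he')))
    have hcard' : (E.erase e₁).card < n := hcard ▸ Finset.card_erase_lt_of_mem he₁
    have hgb : Gbelow G lt e₁ = SimpleGraph.fromEdgeSet ↑(E.erase e₁) := by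
      unfold Gbelow
      congr 1
      ext e'
      simp only [Set.mem_setOf_eq, Finset.coe_erase, Set.mem_diff, Finset.mem_coe,
        Set.mem_singleton_iff]
      constructor
      · rintro ⟨hE, hlt'⟩
        refine ⟨hdc e₁ he₁ e' hE hlt', ?_⟩
        rintro rfl
        exact hlt_irrefl e' hE hlt'
      · rintro ⟨hE', hne⟩
        exact ⟨hsub _ hE', hmax _ hE' hne⟩
    have hle : SimpleGraph.fromEdgeSet (↑(E.erase e₁) : Set (Sym2 V)) ≤
        SimpleGraph.fromEdgeSet (↑E : Set (Sym2 V)) :=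
      SimpleGraph.fromEdgeSet_mono (by exact_mod_cast Finset.erase_subset _ _)
    by_cases hreach : (SimpleGraph.fromEdgeSet (↑(E.erase e₁) : Set (Sym2 V))).Reachable x
        (compMin f (SimpleGraph.fromEdgeSet (↑E : Set (Sym2 V))) x)
    · -- the component of x does not use e₁
      have hcm' : compMin f (SimpleGraph.fromEdgeSet ↑(E.erase e₁)) x =
          compMin f (SimpleGraph.fromEdgeSet ↑E) x := by
        apply hf
        apply le_antisymm
        · exact compMin_le f _ hreach
        · exact compMin_le f _ ((compMin_reachable f _ x).mono hle)
      have h1 := ih _ hcard' (E.erase e₁) rfl hsub' hdc' x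
      rw [hcm'] at h1
      refine h1.mono (SimpleGraph.fromEdgeSet_mono ?_)
      rintro e' ⟨he'E', hneg, hlt'⟩
      exact ⟨Finset.mem_of_mem_erase he'E', hneg, hlt'⟩
    · -- the edge e₁ is a bridge used by the component of x
      have hne_ab : a ≠ b := by
        have hd := G.not_isDiag_of_mem_edgeSet (hsub e₁ he₁)
        rw [hab] at hd
        simpa [Sym2.mk_isDiag_iff] using hd
      have hleSup : SimpleGraph.fromEdgeSet (↑E : Set (Sym2 V)) ≤
          SimpleGraph.fromEdgeSet (↑(E.erase e₁) : Set (Sym2 V)) ⊔ SimpleGraph.edge a b := by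
        intro u v huv
        rw [SimpleGraph.fromEdgeSet_adj] at huv
        obtain ⟨hmem, hneuv⟩ := huv
        by_cases he : s(u, v) = e₁
        · right
          rw [SimpleGraph.edge_adj]
          refine ⟨?_, hneuv⟩
          have h2 : s(u, v) = s(a, b) := by rw [he, hab]
          rcases Sym2.eq_iff.mp h2 with ⟨h3, h4⟩ | ⟨h3, h4⟩
          · exact Or.inl ⟨h3, h4⟩
          · exact Or.inr ⟨h3, h4⟩
        · left
          exact (SimpleGraph.fromEdgeSet_adj _).mpr
            ⟨Finset.mem_coe.mpr (Finset.mem_erase.mpr ⟨he, Finset.mem_coe.mp hmem⟩), hneuv⟩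
      have hbridge := reachable_sup_edge ((compMin_reachable f _ x).mono hleSup)
      have key : ∀ a' b', e₁ = s(a', b') →
          (SimpleGraph.fromEdgeSet (↑(E.erase e₁) : Set (Sym2 V))).Reachable x a' →
          (SimpleGraph.fromEdgeSet (↑(E.erase e₁) : Set (Sym2 V))).Reachable b'
            (compMin f (SimpleGraph.fromEdgeSet (↑E : Set (Sym2 V))) x) →
          (SimpleGraph.fromEdgeSet {e' | e' ∈ E ∧ IsNegEdge G lt e' ∧
              f (compMin f (SimpleGraph.fromEdgeSet ↑E) x) <
                f (pairVert G f hf lt e')}).Reachable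
            x (compMin f (SimpleGraph.fromEdgeSet ↑E) x) := by
        intro a' b' hab' hxa hbm
        have hne' : a' ≠ b' := by
          have hd := G.not_isDiag_of_mem_edgeSet (hsub e₁ he₁)
          rw [hab'] at hd
          simpa [Sym2.mk_isDiag_iff] using hd
        have hnab : ¬ (SimpleGraph.fromEdgeSet (↑(E.erase e₁) : Set (Sym2 V))).Reachable a' b' :=
          fun h => hreach ((hxa.trans h).trans hbm)
        have hneg : IsNegEdge G lt e₁ := ⟨hsub e₁ he₁, a', b', hab', by rw [hgb]; exact hnab⟩
        have hAdj' : (SimpleGraph.fromEdgeSet (↑E : Set (Sym2 V))).Adj a' b' :=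
          (SimpleGraph.fromEdgeSet_adj _).mpr ⟨by rw [← hab']; exact Finset.mem_coe.mpr he₁, hne'⟩
        have hxE : (SimpleGraph.fromEdgeSet (↑E : Set (Sym2 V))).Reachable x a' := hxa.mono hle
        have hq_eq : compMin f (SimpleGraph.fromEdgeSet ↑(E.erase e₁)) b' =
            compMin f (SimpleGraph.fromEdgeSet ↑E) x := by
          apply hf
          apply le_antisymm
          · exact compMin_le f _ hbm
          · exact compMin_le f _
              ((hxE.trans hAdj'.reachable).trans ((compMin_reachable f _ b').mono hle))
        have hpq : compMin f (SimpleGraph.fromEdgeSet ↑(E.erase e₁)) a' ≠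
            compMin f (SimpleGraph.fromEdgeSet ↑(E.erase e₁)) b' := by
          intro h
          refine hnab ((compMin_reachable f _ a').trans ?_)
          rw [h]
          exact (compMin_reachable f _ b').symm
        have hpm : f (compMin f (SimpleGraph.fromEdgeSet ↑E) x) ≤
            f (compMin f (SimpleGraph.fromEdgeSet ↑(E.erase e₁)) a') :=
          compMin_le f _ (hxE.trans ((compMin_reachable f _ a').mono hle))
        have hfm_lt : f (compMin f (SimpleGraph.fromEdgeSet ↑E) x) <
            f (compMin f (SimpleGraph.fromEdgeSet ↑(E.erase e₁)) a') := by
          rcases lt_or_eq_of_le hpm with h | h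
          · exact h
          · exact absurd (hf (hq_eq.symm ▸ h.symm) : _ = _) (by
              intro h2
              exact hpq h2)
        have hq_lt : f (compMin f (SimpleGraph.fromEdgeSet ↑(E.erase e₁)) b') <
            f (compMin f (SimpleGraph.fromEdgeSet ↑(E.erase e₁)) a') := by
          rw [hq_eq]; exact hfm_lt
        have hgb2 : Gbelow G lt s(a', b') = SimpleGraph.fromEdgeSet ↑(E.erase e₁) :=
          hab' ▸ hgb
        have hpv : pairVert G f hf lt e₁ =
            compMin f (SimpleGraph.fromEdgeSet ↑(E.erase e₁)) a' := by
          conv_lhs => rw [hab']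
          simp only [pairVert, Sym2.lift_mk]
          rw [hgb2, if_neg (not_lt.mpr hq_lt.le)]
        -- the three reachabilities from the induction hypothesis
        have hXcm : compMin f (SimpleGraph.fromEdgeSet ↑(E.erase e₁)) x =
            compMin f (SimpleGraph.fromEdgeSet ↑(E.erase e₁)) a' := compMin_congr hf hxa
        have h1 := ih _ hcard' (E.erase e₁) rfl hsub' hdc' x
        rw [hXcm] at h1
        have h2 := ih _ hcard' (E.erase e₁) rfl hsub' hdc' a'
        have h3 := ih _ hcard' (E.erase e₁) rfl hsub' hdc' b'
        rw [hq_eq] at h3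
        have hmono1 : SimpleGraph.fromEdgeSet {e' | e' ∈ E.erase e₁ ∧ IsNegEdge G lt e' ∧
            f (compMin f (SimpleGraph.fromEdgeSet ↑(E.erase e₁)) a') <
              f (pairVert G f hf lt e')} ≤
            SimpleGraph.fromEdgeSet {e' | e' ∈ E ∧ IsNegEdge G lt e' ∧
              f (compMin f (SimpleGraph.fromEdgeSet ↑E) x) < f (pairVert G f hf lt e')} := by
          apply SimpleGraph.fromEdgeSet_mono
          rintro e' ⟨he'E', hneg', hlt'⟩
          exact ⟨Finset.mem_of_mem_erase he'E', hneg', hfm_lt.trans hlt'⟩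
        have hmono3 : SimpleGraph.fromEdgeSet {e' | e' ∈ E.erase e₁ ∧ IsNegEdge G lt e' ∧
            f (compMin f (SimpleGraph.fromEdgeSet ↑E) x) < f (pairVert G f hf lt e')} ≤
            SimpleGraph.fromEdgeSet {e' | e' ∈ E ∧ IsNegEdge G lt e' ∧
              f (compMin f (SimpleGraph.fromEdgeSet ↑E) x) < f (pairVert G f hf lt e')} := by
          apply SimpleGraph.fromEdgeSet_mono
          rintro e' ⟨he'E', hneg', hlt'⟩
          exact ⟨Finset.mem_of_mem_erase he'E', hneg', hlt'⟩
        have hAdjGoal : (SimpleGraph.fromEdgeSet {e' | e' ∈ E ∧ IsNegEdge G lt e' ∧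
            f (compMin f (SimpleGraph.fromEdgeSet ↑E) x) <
              f (pairVert G f hf lt e')}).Adj a' b' := by
          rw [SimpleGraph.fromEdgeSet_adj]
          refine ⟨⟨?_, ?_, ?_⟩, hne'⟩
          · rw [← hab']; exact he₁
          · rw [← hab']; exact hneg
          · rw [← hab', hpv]; exact hfm_lt
        exact (((h1.mono hmono1).trans (h2.mono hmono1).symm).trans hAdjGoal.reachable).trans
          (h3.mono hmono3)
      rcases hbridge with h | ⟨h1, h2⟩ | ⟨h1, h2⟩
      · exact absurd h hreach
      · exact key a b hab h1 h2
      · exact key b a (by rw [hab]; exact Sym2.eq_swap) h1 h2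
set_option maxHeartbeats 1000000 in
lemma claimE_aux {V : Type*} [Fintype V] {G : SimpleGraph V} {f : V → ℝ}
    (hf : Function.Injective f) {lt : Sym2 V → Sym2 V → Prop}
    (hlt_irrefl : ∀ e ∈ G.edgeSet, ¬ lt e e)
    (hlt_trans : ∀ e₁ ∈ G.edgeSet, ∀ e₂ ∈ G.edgeSet, ∀ e₃ ∈ G.edgeSet,
      lt e₁ e₂ → lt e₂ e₃ → lt e₁ e₃)
    (hlt_total : ∀ e₁ ∈ G.edgeSet, ∀ e₂ ∈ G.edgeSet, e₁ ≠ e₂ → lt e₁ e₂ ∨ lt e₂ e₁) :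
    ∀ (n : ℕ) (E : Finset (Sym2 V)), E.card = n →
      (∀ e ∈ E, e ∈ G.edgeSet) →
      (∀ e' ∈ E, ∀ e'' ∈ G.edgeSet, lt e'' e' → e'' ∈ E) →
      ∀ (x : V) (c : ℝ), f (compMin f (SimpleGraph.fromEdgeSet ↑E) x) < c →
      ∃ y : V, f y < c ∧
        (SimpleGraph.fromEdgeSet {e' | e' ∈ E ∧ IsNegEdge G lt e' ∧
            c ≤ f (pairVert G f hf lt e')}).Reachable x y := by
  classical
  intro n
  induction n using Nat.strong_induction_on with
  | _ n ih =>
  intro E hcard hsub hdc x c hc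
  rcases E.eq_empty_or_nonempty with rfl | hEne
  · refine ⟨x, ?_, SimpleGraph.Reachable.refl x⟩
    have hm : compMin f (SimpleGraph.fromEdgeSet
        ((∅ : Finset (Sym2 V)) : Set (Sym2 V))) x = x := by
      have hr := compMin_reachable f (SimpleGraph.fromEdgeSet
        ((∅ : Finset (Sym2 V)) : Set (Sym2 V))) x
      rw [show ((∅ : Finset (Sym2 V)) : Set (Sym2 V)) = (∅ : Set (Sym2 V)) from
        Finset.coe_empty, SimpleGraph.fromEdgeSet_empty] at hr ⊢
      exact (SimpleGraph.reachable_bot.mp hr).symm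
    rwa [hm] at hc
  · obtain ⟨e₁, he₁, hmax⟩ := exists_rel_max hlt_total hlt_trans E hsub hEne
    obtain ⟨a, b, hab⟩ : ∃ a b, e₁ = s(a, b) := Sym2.ind (fun a b => ⟨a, b, rfl⟩) e₁
    have hsub' : ∀ e ∈ E.erase e₁, e ∈ G.edgeSet := fun e he =>
      hsub e (Finset.mem_of_mem_erase he)
    have hdc' : ∀ e' ∈ E.erase e₁, ∀ e'' ∈ G.edgeSet, lt e'' e' → e'' ∈ E.erase e₁ := by
      intro e' he' e'' he''G hlt'
      have he'E := Finset.mem_of_mem_erase he'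
      have hmem : e'' ∈ E := hdc e' he'E e'' he''G hlt'
      refine Finset.mem_erase.mpr ⟨?_, hmem⟩
      rintro rfl
      exact hlt_irrefl _ (hsub _ hmem)
        (hlt_trans _ (hsub _ hmem) e' (hsub _ he'E) _ (hsub _ hmem) hlt'
          (hmax e' he'E (Finset.ne_of_mem_erase he')))
    have hcard' : (E.erase e₁).card < n := hcard ▸ Finset.card_erase_lt_of_mem he₁
    have hgb : Gbelow G lt e₁ = SimpleGraph.fromEdgeSet ↑(E.erase e₁) := by
      unfold Gbelow
      congr 1
      ext e'
      simp only [Set.mem_setOf_eq, Finset.coe_erase, Set.mem_diff, Finset.mem_coe,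
        Set.mem_singleton_iff]
      constructor
      · rintro ⟨hE, hlt'⟩
        refine ⟨hdc e₁ he₁ e' hE hlt', ?_⟩
        rintro rfl
        exact hlt_irrefl e' hE hlt'
      · rintro ⟨hE', hne⟩
        exact ⟨hsub _ hE', hmax _ hE' hne⟩
    have hle : SimpleGraph.fromEdgeSet (↑(E.erase e₁) : Set (Sym2 V)) ≤
        SimpleGraph.fromEdgeSet (↑E : Set (Sym2 V)) :=
      SimpleGraph.fromEdgeSet_mono (by exact_mod_cast Finset.erase_subset _ _)
    have hmono : SimpleGraph.fromEdgeSet {e' | e' ∈ E.erase e₁ ∧ IsNegEdge G lt e' ∧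
        c ≤ f (pairVert G f hf lt e')} ≤
        SimpleGraph.fromEdgeSet {e' | e' ∈ E ∧ IsNegEdge G lt e' ∧
          c ≤ f (pairVert G f hf lt e')} := by
      apply SimpleGraph.fromEdgeSet_mono
      rintro e' ⟨he'E', hneg', hlt'⟩
      exact ⟨Finset.mem_of_mem_erase he'E', hneg', hlt'⟩
    by_cases hreach : (SimpleGraph.fromEdgeSet (↑(E.erase e₁) : Set (Sym2 V))).Reachable x
        (compMin f (SimpleGraph.fromEdgeSet (↑E : Set (Sym2 V))) x)
    · have hcm' : compMin f (SimpleGraph.fromEdgeSet ↑(E.erase e₁)) x =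
          compMin f (SimpleGraph.fromEdgeSet ↑E) x := by
        apply hf
        apply le_antisymm
        · exact compMin_le f _ hreach
        · exact compMin_le f _ ((compMin_reachable f _ x).mono hle)
      obtain ⟨y, hy, hry⟩ := ih _ hcard' (E.erase e₁) rfl hsub' hdc' x c (by rwa [hcm'])
      exact ⟨y, hy, hry.mono hmono⟩
    · have key : ∀ a' b', e₁ = s(a', b') →
          (SimpleGraph.fromEdgeSet (↑(E.erase e₁) : Set (Sym2 V))).Reachable x a' →
          (SimpleGraph.fromEdgeSet (↑(E.erase e₁) : Set (Sym2 V))).Reachable b'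
            (compMin f (SimpleGraph.fromEdgeSet (↑E : Set (Sym2 V))) x) →
          ∃ y : V, f y < c ∧
            (SimpleGraph.fromEdgeSet {e' | e' ∈ E ∧ IsNegEdge G lt e' ∧
                c ≤ f (pairVert G f hf lt e')}).Reachable x y := by
        intro a' b' hab' hxa hbm
        have hne' : a' ≠ b' := by
          have hd := G.not_isDiag_of_mem_edgeSet (hsub e₁ he₁)
          rw [hab'] at hd
          simpa [Sym2.mk_isDiag_iff] using hd
        have hnab : ¬ (SimpleGraph.fromEdgeSet (↑(E.erase e₁) : Set (Sym2 V))).Reachable a' b' :=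
          fun h => hreach ((hxa.trans h).trans hbm)
        have hneg : IsNegEdge G lt e₁ := ⟨hsub e₁ he₁, a', b', hab', by rw [hgb]; exact hnab⟩
        have hAdj' : (SimpleGraph.fromEdgeSet (↑E : Set (Sym2 V))).Adj a' b' :=
          (SimpleGraph.fromEdgeSet_adj _).mpr ⟨by rw [← hab']; exact Finset.mem_coe.mpr he₁, hne'⟩
        have hxE : (SimpleGraph.fromEdgeSet (↑E : Set (Sym2 V))).Reachable x a' := hxa.mono hle
        have hq_eq : compMin f (SimpleGraph.fromEdgeSet ↑(E.erase e₁)) b' =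
            compMin f (SimpleGraph.fromEdgeSet ↑E) x := by
          apply hf
          apply le_antisymm
          · exact compMin_le f _ hbm
          · exact compMin_le f _
              ((hxE.trans hAdj'.reachable).trans ((compMin_reachable f _ b').mono hle))
        have hpq : compMin f (SimpleGraph.fromEdgeSet ↑(E.erase e₁)) a' ≠
            compMin f (SimpleGraph.fromEdgeSet ↑(E.erase e₁)) b' := by
          intro h
          refine hnab ((compMin_reachable f _ a').trans ?_)
          rw [h]
          exact (compMin_reachable f _ b').symm
        have hpm : f (compMin f (SimpleGraph.fromEdgeSet ↑E) x) ≤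
            f (compMin f (SimpleGraph.fromEdgeSet ↑(E.erase e₁)) a') :=
          compMin_le f _ (hxE.trans ((compMin_reachable f _ a').mono hle))
        have hfm_lt : f (compMin f (SimpleGraph.fromEdgeSet ↑E) x) <
            f (compMin f (SimpleGraph.fromEdgeSet ↑(E.erase e₁)) a') := by
          rcases lt_or_eq_of_le hpm with h | h
          · exact h
          · exact absurd (hf (hq_eq.symm ▸ h.symm) : _ = _) (by
              intro h2
              exact hpq h2)
        have hq_lt : f (compMin f (SimpleGraph.fromEdgeSet ↑(E.erase e₁)) b') <
            f (compMin f (SimpleGraph.fromEdgeSet ↑(E.erase e₁)) a') := by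
          rw [hq_eq]; exact hfm_lt
        have hgb2 : Gbelow G lt s(a', b') = SimpleGraph.fromEdgeSet ↑(E.erase e₁) :=
          hab' ▸ hgb
        have hpv : pairVert G f hf lt e₁ =
            compMin f (SimpleGraph.fromEdgeSet ↑(E.erase e₁)) a' := by
          conv_lhs => rw [hab']
          simp only [pairVert, Sym2.lift_mk]
          rw [hgb2, if_neg (not_lt.mpr hq_lt.le)]
        have hXcm : compMin f (SimpleGraph.fromEdgeSet ↑(E.erase e₁)) x =
            compMin f (SimpleGraph.fromEdgeSet ↑(E.erase e₁)) a' := compMin_congr hf hxa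
        by_cases hpc : f (compMin f (SimpleGraph.fromEdgeSet ↑(E.erase e₁)) a') < c
        · -- even the minimum on the x-side is below c; recurse on the x-side
          obtain ⟨y, hy, hry⟩ := ih _ hcard' (E.erase e₁) rfl hsub' hdc' x c (by rwa [hXcm])
          exact ⟨y, hy, hry.mono hmono⟩
        · -- c ≤ f p; connect x to p to a', cross e₁, and recurse on the b'-side
          push_neg at hpc
          have hG1 := claimG_aux hf hlt_irrefl hlt_trans hlt_total _ (E.erase e₁) rfl
            hsub' hdc' x
          rw [hXcm] at hG1
          have hG2 := claimG_aux hf hlt_irrefl hlt_trans hlt_total _ (E.erase e₁) rfl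
            hsub' hdc' a'
          obtain ⟨y, hy, hry⟩ := ih _ hcard' (E.erase e₁) rfl hsub' hdc' b' c
            (by rw [hq_eq]; exact hc)
          have hmonoG : SimpleGraph.fromEdgeSet {e' | e' ∈ E.erase e₁ ∧ IsNegEdge G lt e' ∧
              f (compMin f (SimpleGraph.fromEdgeSet ↑(E.erase e₁)) a') <
                f (pairVert G f hf lt e')} ≤
              SimpleGraph.fromEdgeSet {e' | e' ∈ E ∧ IsNegEdge G lt e' ∧
                c ≤ f (pairVert G f hf lt e')} := by
            apply SimpleGraph.fromEdgeSet_mono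
            rintro e' ⟨he'E', hneg', hlt'⟩
            exact ⟨Finset.mem_of_mem_erase he'E', hneg', (hpc.trans hlt'.le)⟩
          have hAdjGoal : (SimpleGraph.fromEdgeSet {e' | e' ∈ E ∧ IsNegEdge G lt e' ∧
              c ≤ f (pairVert G f hf lt e')}).Adj a' b' := by
            rw [SimpleGraph.fromEdgeSet_adj]
            refine ⟨⟨?_, ?_, ?_⟩, hne'⟩
            · rw [← hab']; exact he₁
            · rw [← hab']; exact hneg
            · rw [← hab', hpv]; exact hpc
          exact ⟨y, hy, ((((hG1.mono hmonoG).trans (hG2.mono hmonoG).symm).trans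
            hAdjGoal.reachable).trans (hry.mono hmono))⟩
      have hleSup : SimpleGraph.fromEdgeSet (↑E : Set (Sym2 V)) ≤
          SimpleGraph.fromEdgeSet (↑(E.erase e₁) : Set (Sym2 V)) ⊔ SimpleGraph.edge a b := by
        intro u v huv
        rw [SimpleGraph.fromEdgeSet_adj] at huv
        obtain ⟨hmem, hneuv⟩ := huv
        by_cases he : s(u, v) = e₁
        · right
          rw [SimpleGraph.edge_adj]
          refine ⟨?_, hneuv⟩
          have h2 : s(u, v) = s(a, b) := by rw [he, hab]
          rcases Sym2.eq_iff.mp h2 with ⟨h3, h4⟩ | ⟨h3, h4⟩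
          · exact Or.inl ⟨h3, h4⟩
          · exact Or.inr ⟨h3, h4⟩
        · left
          exact (SimpleGraph.fromEdgeSet_adj _).mpr
            ⟨Finset.mem_coe.mpr (Finset.mem_erase.mpr ⟨he, Finset.mem_coe.mp hmem⟩), hneuv⟩
      have hbridge := reachable_sup_edge ((compMin_reachable f
        (SimpleGraph.fromEdgeSet (↑E : Set (Sym2 V))) x).mono hleSup)
      rcases hbridge with h | ⟨h1, h2⟩ | ⟨h1, h2⟩
      · exact absurd h hreach
      · exact key a b hab h1 h2
      · exact key b a (by rw [hab]; exact Sym2.eq_swap) h1 h2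
lemma fbar_le_of_lt {V : Type*} {G : SimpleGraph V} {f : V → ℝ} {lt : Sym2 V → Sym2 V → Prop}
    (hlt_irrefl : ∀ e ∈ G.edgeSet, ¬ lt e e)
    (hlt_trans : ∀ e₁ ∈ G.edgeSet, ∀ e₂ ∈ G.edgeSet, ∀ e₃ ∈ G.edgeSet,
      lt e₁ e₂ → lt e₂ e₃ → lt e₁ e₃)
    (hlt_refine : ∀ e₁ ∈ G.edgeSet, ∀ e₂ ∈ G.edgeSet, fbar f e₁ < fbar f e₂ → lt e₁ e₂)
    {e e' : Sym2 V} (he : e ∈ G.edgeSet) (he' : e' ∈ G.edgeSet) (h : lt e' e) :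
    fbar f e' ≤ fbar f e := by
  by_contra h2
  push_neg at h2
  exact hlt_irrefl e' he'
    (hlt_trans e' he' e he e' he' h (hlt_refine e he e' he' h2))

lemma claimG' {V : Type*} [Fintype V] {G : SimpleGraph V} {f : V → ℝ}
    (hf : Function.Injective f) {lt : Sym2 V → Sym2 V → Prop}
    (hlt_irrefl : ∀ e ∈ G.edgeSet, ¬ lt e e)
    (hlt_trans : ∀ e₁ ∈ G.edgeSet, ∀ e₂ ∈ G.edgeSet, ∀ e₃ ∈ G.edgeSet,
      lt e₁ e₂ → lt e₂ e₃ → lt e₁ e₃)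
    (hlt_total : ∀ e₁ ∈ G.edgeSet, ∀ e₂ ∈ G.edgeSet, e₁ ≠ e₂ → lt e₁ e₂ ∨ lt e₂ e₁)
    {e : Sym2 V} (he : e ∈ G.edgeSet) (x : V) :
    (SimpleGraph.fromEdgeSet {e' | (e' ∈ G.edgeSet ∧ lt e' e) ∧ IsNegEdge G lt e' ∧
        f (compMin f (Gbelow G lt e) x) < f (pairVert G f hf lt e')}).Reachable x
      (compMin f (Gbelow G lt e) x) := by
  classical
  have hfin : {e' | e' ∈ G.edgeSet ∧ lt e' e}.Finite := Set.toFinite _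
  have hcoe : (↑hfin.toFinset : Set (Sym2 V)) = {e' | e' ∈ G.edgeSet ∧ lt e' e} :=
    hfin.coe_toFinset
  have hsub : ∀ e' ∈ hfin.toFinset, e' ∈ G.edgeSet := fun e' h =>
    (hfin.mem_toFinset.mp h).1
  have hdc : ∀ e' ∈ hfin.toFinset, ∀ e'' ∈ G.edgeSet, lt e'' e' → e'' ∈ hfin.toFinset := by
    intro e' h e'' hG2 hl
    obtain ⟨h1, h2⟩ := hfin.mem_toFinset.mp h
    exact hfin.mem_toFinset.mpr ⟨hG2, hlt_trans e'' hG2 e' h1 e he hl h2⟩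
  have h := claimG_aux hf hlt_irrefl hlt_trans hlt_total hfin.toFinset.card hfin.toFinset rfl
    hsub hdc x
  have hgb : Gbelow G lt e = SimpleGraph.fromEdgeSet (↑hfin.toFinset : Set (Sym2 V)) := by
    rw [hcoe]; rfl
  rw [hgb]
  have hset : {e' | e' ∈ hfin.toFinset ∧ IsNegEdge G lt e' ∧
      f (compMin f (SimpleGraph.fromEdgeSet (↑hfin.toFinset : Set (Sym2 V))) x) <
        f (pairVert G f hf lt e')} =
      {e' | (e' ∈ G.edgeSet ∧ lt e' e) ∧ IsNegEdge G lt e' ∧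
        f (compMin f (SimpleGraph.fromEdgeSet (↑hfin.toFinset : Set (Sym2 V))) x) <
          f (pairVert G f hf lt e')} := by
    ext e'
    simp only [Set.mem_setOf_eq, Set.Finite.mem_toFinset]
  rw [← hset]
  exact h

lemma claimE' {V : Type*} [Fintype V] {G : SimpleGraph V} {f : V → ℝ}
    (hf : Function.Injective f) {lt : Sym2 V → Sym2 V → Prop}
    (hlt_irrefl : ∀ e ∈ G.edgeSet, ¬ lt e e)
    (hlt_trans : ∀ e₁ ∈ G.edgeSet, ∀ e₂ ∈ G.edgeSet, ∀ e₃ ∈ G.edgeSet,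
      lt e₁ e₂ → lt e₂ e₃ → lt e₁ e₃)
    (hlt_total : ∀ e₁ ∈ G.edgeSet, ∀ e₂ ∈ G.edgeSet, e₁ ≠ e₂ → lt e₁ e₂ ∨ lt e₂ e₁)
    {e : Sym2 V} (he : e ∈ G.edgeSet) (x : V) (c : ℝ)
    (hc : f (compMin f (Gbelow G lt e) x) < c) :
    ∃ y : V, f y < c ∧
      (SimpleGraph.fromEdgeSet {e' | (e' ∈ G.edgeSet ∧ lt e' e) ∧ IsNegEdge G lt e' ∧
          c ≤ f (pairVert G f hf lt e')}).Reachable x y := by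
  classical
  have hfin : {e' | e' ∈ G.edgeSet ∧ lt e' e}.Finite := Set.toFinite _
  have hcoe : (↑hfin.toFinset : Set (Sym2 V)) = {e' | e' ∈ G.edgeSet ∧ lt e' e} :=
    hfin.coe_toFinset
  have hsub : ∀ e' ∈ hfin.toFinset, e' ∈ G.edgeSet := fun e' h =>
    (hfin.mem_toFinset.mp h).1
  have hdc : ∀ e' ∈ hfin.toFinset, ∀ e'' ∈ G.edgeSet, lt e'' e' → e'' ∈ hfin.toFinset := by
    intro e' h e'' hG2 hl
    obtain ⟨h1, h2⟩ := hfin.mem_toFinset.mp h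
    exact hfin.mem_toFinset.mpr ⟨hG2, hlt_trans e'' hG2 e' h1 e he hl h2⟩
  have hgb : Gbelow G lt e = SimpleGraph.fromEdgeSet (↑hfin.toFinset : Set (Sym2 V)) := by
    rw [hcoe]; rfl
  rw [hgb] at hc
  obtain ⟨y, hy, hr⟩ := claimE_aux hf hlt_irrefl hlt_trans hlt_total hfin.toFinset.card
    hfin.toFinset rfl hsub hdc x c hc
  refine ⟨y, hy, ?_⟩
  have hset : {e' | e' ∈ hfin.toFinset ∧ IsNegEdge G lt e' ∧
      c ≤ f (pairVert G f hf lt e')} =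
      {e' | (e' ∈ G.edgeSet ∧ lt e' e) ∧ IsNegEdge G lt e' ∧
        c ≤ f (pairVert G f hf lt e')} := by
    ext e'
    simp only [Set.mem_setOf_eq, Set.Finite.mem_toFinset]
  rw [← hset]
  exact hr
/-- For every `δ ≥ 0`, every connected component of the spanning subgraph
`T_δ` (edges: the negative edges with persistence at most `δ`) contains exactly one vertex
that is unpaired or paired with persistence strictly greater than `δ`, namely the vertex of
the component minimizing `f` (the sink). -/
theorem sink_unique_in_component {V : Type*} [Fintype V]
    (G : SimpleGraph V) (f : V → ℝ) (hf : Function.Injective f)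
    (lt : Sym2 V → Sym2 V → Prop)
    (hlt_irrefl : ∀ e ∈ G.edgeSet, ¬ lt e e)
    (hlt_trans : ∀ e₁ ∈ G.edgeSet, ∀ e₂ ∈ G.edgeSet, ∀ e₃ ∈ G.edgeSet,
      lt e₁ e₂ → lt e₂ e₃ → lt e₁ e₃)
    (hlt_total : ∀ e₁ ∈ G.edgeSet, ∀ e₂ ∈ G.edgeSet, e₁ ≠ e₂ → lt e₁ e₂ ∨ lt e₂ e₁)
    (hlt_refine : ∀ e₁ ∈ G.edgeSet, ∀ e₂ ∈ G.edgeSet, fbar f e₁ < fbar f e₂ → lt e₁ e₂)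
    (δ : ℝ) (hδ : 0 ≤ δ) :
    ∀ v : V, ∃ u : V,
      (SimpleGraph.fromEdgeSet
          {e | IsNegEdge G lt e ∧ persE G f hf lt e ≤ δ}).Reachable v u ∧
      (∀ e : Sym2 V, IsNegEdge G lt e → pairVert G f hf lt e = u → δ < persE G f hf lt e) ∧
      (∀ w : V,
        (SimpleGraph.fromEdgeSet
            {e | IsNegEdge G lt e ∧ persE G f hf lt e ≤ δ}).Reachable v w → f u ≤ f w) ∧
      (∀ u' : V,
        (SimpleGraph.fromEdgeSet
            {e | IsNegEdge G lt e ∧ persE G f hf lt e ≤ δ}).Reachable v u' →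
        (∀ e : Sym2 V, IsNegEdge G lt e → pairVert G f hf lt e = u' →
          δ < persE G f hf lt e) → u' = u) := by
  classical
  intro v
  set T := SimpleGraph.fromEdgeSet {e | IsNegEdge G lt e ∧ persE G f hf lt e ≤ δ} with hT
  refine ⟨compMin f T v, compMin_reachable f T v, ?_, fun w hw => compMin_le f T hw, ?_⟩
  · -- no negative edge with small persistence is paired with the sink
    intro e hneg hpv
    by_contra hgt
    push_neg at hgt
    obtain ⟨heG, a, b, hab, hnr⟩ := id hneg
    have hfbu : fbar f e - f (compMin f T v) ≤ δ := by
      have h0 : persE G f hf lt e = fbar f e - f (compMin f T v) := by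
        simp only [persE, hpv]
      rwa [h0] at hgt
    have key : ∀ a' b', e = s(a', b') →
        compMin f (Gbelow G lt e) b' = compMin f T v →
        f (compMin f (Gbelow G lt e) a') < f (compMin f T v) → False := by
      intro a' b' hab2 hcmb hcma
      have hne' : a' ≠ b' := by
        have hd := G.not_isDiag_of_mem_edgeSet heG
        rw [hab2] at hd
        simpa [Sym2.mk_isDiag_iff] using hd
      have hG := claimG' hf hlt_irrefl hlt_trans hlt_total heG b'
      rw [hcmb] at hG
      obtain ⟨y, hy, hr⟩ := claimE' hf hlt_irrefl hlt_trans hlt_total heG a'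
        (f (compMin f T v)) hcma
      have hincl1 : SimpleGraph.fromEdgeSet {e' | (e' ∈ G.edgeSet ∧ lt e' e) ∧
          IsNegEdge G lt e' ∧ f (compMin f T v) < f (pairVert G f hf lt e')} ≤ T := by
        rw [hT]
        apply SimpleGraph.fromEdgeSet_mono
        rintro e' ⟨⟨he'G, hlt'⟩, hneg', hgt'⟩
        refine ⟨hneg', ?_⟩
        have h1 : fbar f e' ≤ fbar f e :=
          fbar_le_of_lt hlt_irrefl hlt_trans hlt_refine heG he'G hlt'
        simp only [persE]
        linarith
      have hincl2 : SimpleGraph.fromEdgeSet {e' | (e' ∈ G.edgeSet ∧ lt e' e) ∧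
          IsNegEdge G lt e' ∧ f (compMin f T v) ≤ f (pairVert G f hf lt e')} ≤ T := by
        rw [hT]
        apply SimpleGraph.fromEdgeSet_mono
        rintro e' ⟨⟨he'G, hlt'⟩, hneg', hgt'⟩
        refine ⟨hneg', ?_⟩
        have h1 : fbar f e' ≤ fbar f e :=
          fbar_le_of_lt hlt_irrefl hlt_trans hlt_refine heG he'G hlt'
        simp only [persE]
        linarith
      have hadjT : T.Adj a' b' := by
        rw [hT]
        refine (SimpleGraph.fromEdgeSet_adj _).mpr ⟨?_, hne'⟩
        rw [← hab2]
        exact ⟨hneg, hgt⟩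
      have hvy : T.Reachable v y :=
        (((compMin_reachable f T v).trans (hG.mono hincl1).symm).trans
          hadjT.reachable.symm).trans (hr.mono hincl2)
      exact absurd (compMin_le f T hvy) (not_le.mpr hy)
    have hgb3 : Gbelow G lt s(a, b) = Gbelow G lt e := by rw [hab]
    have hcomp : pairVert G f hf lt e =
        if f (compMin f (Gbelow G lt e) a) < f (compMin f (Gbelow G lt e) b)
        then compMin f (Gbelow G lt e) b else compMin f (Gbelow G lt e) a := by
      conv_lhs => rw [hab]
      simp only [pairVert, Sym2.lift_mk, hgb3]
    by_cases hcase : f (compMin f (Gbelow G lt e) a) < f (compMin f (Gbelow G lt e) b)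
    · have hcmb : compMin f (Gbelow G lt e) b = compMin f T v := by
        have h2 := hcomp.symm.trans hpv
        rwa [if_pos hcase] at h2
      exact key a b hab hcmb (by rw [← hcmb]; exact hcase)
    · have hcma : compMin f (Gbelow G lt e) a = compMin f T v := by
        have h2 := hcomp.symm.trans hpv
        rwa [if_neg hcase] at h2
      have hneq : compMin f (Gbelow G lt e) b ≠ compMin f (Gbelow G lt e) a := by
        intro h
        refine hnr ((compMin_reachable f _ a).trans ?_)
        rw [← h]
        exact (compMin_reachable f _ b).symm
      have hblt : f (compMin f (Gbelow G lt e) b) < f (compMin f T v) := by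
        rw [← hcma]
        rcases lt_or_eq_of_le (not_lt.mp hcase) with h | h
        · exact h
        · exact absurd (hf h) hneq
      exact key b a (hab.trans Sym2.eq_swap) hcma hblt
  · -- uniqueness of the sink
    intro u' hru' hup
    by_contra hne
    have hfu : f (compMin f T v) ≤ f u' := compMin_le f T hru'
    have hfu' : f (compMin f T v) < f u' :=
      lt_of_le_of_ne hfu (fun h => hne ((hf h).symm))
    have hTuu : T.Reachable u' (compMin f T v) := hru'.symm.trans (compMin_reachable f T v)
    -- The set S of "T-edges below which u' already reaches a strictly smaller vertex"
    have walk_to_S : ∀ (s : Set (Sym2 V)),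
        (∀ e0 ∈ s, IsNegEdge G lt e0 ∧ persE G f hf lt e0 ≤ δ) →
        ∀ y, f y < f u' → (SimpleGraph.fromEdgeSet s).Reachable u' y →
        ∃ em ∈ s, (IsNegEdge G lt em ∧ persE G f hf lt em ≤ δ) ∧ ∃ y', f y' < f u' ∧
          (SimpleGraph.fromEdgeSet {e'' | (IsNegEdge G lt e'' ∧ persE G f hf lt e'' ≤ δ) ∧
            (lt e'' em ∨ e'' = em)}).Reachable u' y' := by
      intro s hsT y hy hr
      obtain ⟨p⟩ := hr
      have hne_uy : u' ≠ y := by rintro rfl; exact lt_irrefl _ hy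
      have hfinne : p.edges.toFinset.Nonempty := by
        cases p with
        | nil => exact absurd rfl hne_uy
        | @cons _ w _ hadj q => exact ⟨s(u', w), List.mem_toFinset.mpr (by simp)⟩
      have hsubE : ∀ e0 ∈ p.edges.toFinset, e0 ∈ G.edgeSet := by
        intro e0 he0
        have h1 := p.edges_subset_edgeSet (List.mem_toFinset.mp he0)
        rw [SimpleGraph.edgeSet_fromEdgeSet] at h1
        exact (hsT e0 h1.1).1.1
      obtain ⟨em, hemmem, hmax⟩ := exists_rel_max hlt_total hlt_trans _ hsubE hfinne
      have hems : em ∈ s := by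
        have h1 := p.edges_subset_edgeSet (List.mem_toFinset.mp hemmem)
        rw [SimpleGraph.edgeSet_fromEdgeSet] at h1
        exact h1.1
      refine ⟨em, hems, hsT em hems, y, hy, ⟨p.transfer _ ?_⟩⟩
      intro e0 he0
      have h1 := p.edges_subset_edgeSet he0
      rw [SimpleGraph.edgeSet_fromEdgeSet] at h1 ⊢
      refine ⟨⟨hsT e0 h1.1, ?_⟩, h1.2⟩
      rcases eq_or_ne e0 em with rfl | hne0
      · exact Or.inr rfl
      · exact Or.inl (hmax e0 (List.mem_toFinset.mpr he0) hne0)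
    -- S is nonempty
    have hSfin : ({e0 : Sym2 V | (IsNegEdge G lt e0 ∧ persE G f hf lt e0 ≤ δ) ∧
        ∃ y', f y' < f u' ∧
          (SimpleGraph.fromEdgeSet {e'' | (IsNegEdge G lt e'' ∧ persE G f hf lt e'' ≤ δ) ∧
            (lt e'' e0 ∨ e'' = e0)}).Reachable u' y'}).Finite := Set.toFinite _
    have hSne : hSfin.toFinset.Nonempty := by
      obtain ⟨em, _, hemT, hemY⟩ := walk_to_S {e | IsNegEdge G lt e ∧ persE G f hf lt e ≤ δ}
        (fun e0 he0 => he0) (compMin f T v) hfu' (by rw [← hT]; exact hTuu)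
      exact ⟨em, hSfin.mem_toFinset.mpr ⟨hemT, hemY⟩⟩
    have hSsub : ∀ e0 ∈ hSfin.toFinset, e0 ∈ G.edgeSet := fun e0 h =>
      ((hSfin.mem_toFinset.mp h).1).1.1
    obtain ⟨estar, hestar, hmin⟩ := exists_rel_min hlt_total hlt_trans _ hSsub hSne
    obtain ⟨⟨hnegstar, hpersstar⟩, y₀, hy₀, hr₀⟩ := hSfin.mem_toFinset.mp hestar
    have hestarG : estar ∈ G.edgeSet := hnegstar.1
    -- u' cannot reach any smaller vertex strictly below estar
    have hnotbelow : ¬ ∃ y, f y < f u' ∧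
        (SimpleGraph.fromEdgeSet {e'' | (IsNegEdge G lt e'' ∧ persE G f hf lt e'' ≤ δ) ∧
          lt e'' estar}).Reachable u' y := by
      rintro ⟨y, hy, hr⟩
      obtain ⟨em, hemmem, hemT, hemY⟩ := walk_to_S _ (fun e0 he0 => he0.1) y hy hr
      have hemS : em ∈ hSfin.toFinset := hSfin.mem_toFinset.mpr ⟨hemT, hemY⟩
      have hemlt : lt em estar := hemmem.2
      have hemne : em ≠ estar := by
        rintro rfl
        exact hlt_irrefl em hemT.1.1 hemlt
      exact hlt_irrefl estar hestarG
        (hlt_trans estar hestarG em hemT.1.1 estar hestarG (hmin em hemS hemne) hemlt)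
    obtain ⟨_, a, b, hab, hnr⟩ := id hnegstar
    -- the graph over which u' reaches y₀ decomposes over the bridge estar
    have hleSup : SimpleGraph.fromEdgeSet {e'' | (IsNegEdge G lt e'' ∧
          persE G f hf lt e'' ≤ δ) ∧ (lt e'' estar ∨ e'' = estar)} ≤
        SimpleGraph.fromEdgeSet {e'' | (IsNegEdge G lt e'' ∧ persE G f hf lt e'' ≤ δ) ∧
          lt e'' estar} ⊔ SimpleGraph.edge a b := by
      intro x y hxy
      rw [SimpleGraph.fromEdgeSet_adj] at hxy
      obtain ⟨⟨hTe, hdisj⟩, hnexy⟩ := hxy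
      rcases hdisj with hl | heq
      · left
        exact (SimpleGraph.fromEdgeSet_adj _).mpr ⟨⟨hTe, hl⟩, hnexy⟩
      · right
        rw [SimpleGraph.edge_adj]
        refine ⟨?_, hnexy⟩
        have h2 : s(x, y) = s(a, b) := by rw [heq, hab]
        rcases Sym2.eq_iff.mp h2 with ⟨h3, h4⟩ | ⟨h3, h4⟩
        · exact Or.inl ⟨h3, h4⟩
        · exact Or.inr ⟨h3, h4⟩
    have key3 : ∀ a' b', estar = s(a', b') →
        (SimpleGraph.fromEdgeSet {e'' | (IsNegEdge G lt e'' ∧ persE G f hf lt e'' ≤ δ) ∧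
          lt e'' estar}).Reachable u' a' →
        (SimpleGraph.fromEdgeSet {e'' | (IsNegEdge G lt e'' ∧ persE G f hf lt e'' ≤ δ) ∧
          lt e'' estar}).Reachable b' y₀ → False := by
      intro a' b' hab2 hxa hby
      have hCle : SimpleGraph.fromEdgeSet {e'' | (IsNegEdge G lt e'' ∧
          persE G f hf lt e'' ≤ δ) ∧ lt e'' estar} ≤ Gbelow G lt estar := by
        apply SimpleGraph.fromEdgeSet_mono
        rintro e'' ⟨⟨hneg'', _⟩, hl⟩
        exact ⟨hneg''.1, hl⟩
      have hqle : f (compMin f (Gbelow G lt estar) b') ≤ f y₀ :=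
        compMin_le f _ (hby.mono hCle)
      have hqlt : f (compMin f (Gbelow G lt estar) b') < f u' := hqle.trans_lt hy₀
      have hple : f (compMin f (Gbelow G lt estar) a') ≤ f u' :=
        compMin_le f _ (hxa.mono hCle).symm
      -- compute pairVert estar
      have hgb3 : Gbelow G lt s(a', b') = Gbelow G lt estar := by rw [hab2]
      have hcomp : pairVert G f hf lt estar =
          if f (compMin f (Gbelow G lt estar) a') < f (compMin f (Gbelow G lt estar) b')
          then compMin f (Gbelow G lt estar) b' else compMin f (Gbelow G lt estar) a' := by
        conv_lhs => rw [hab2]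
        simp only [pairVert, Sym2.lift_mk, hgb3]
      have hcase : ¬ f (compMin f (Gbelow G lt estar) a') < f u' := by
        intro hplt
        -- then u' reaches a smaller vertex strictly below estar: contradiction
        have hcmu : compMin f (Gbelow G lt estar) u' = compMin f (Gbelow G lt estar) a' :=
          compMin_congr hf (hxa.mono hCle)
        obtain ⟨y, hy, hr⟩ := claimE' hf hlt_irrefl hlt_trans hlt_total hestarG u'
          (f u') (by rw [hcmu]; exact hplt)
        have hpvlt : f (pairVert G f hf lt estar) < f u' := by
          rw [hcomp]
          split_ifs
          · exact hqlt
          · exact hplt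
        have hincl : SimpleGraph.fromEdgeSet {e' | (e' ∈ G.edgeSet ∧ lt e' estar) ∧
            IsNegEdge G lt e' ∧ f u' ≤ f (pairVert G f hf lt e')} ≤
            SimpleGraph.fromEdgeSet {e'' | (IsNegEdge G lt e'' ∧ persE G f hf lt e'' ≤ δ) ∧
              lt e'' estar} := by
          apply SimpleGraph.fromEdgeSet_mono
          rintro e' ⟨⟨he'G, hlt'⟩, hneg', hge'⟩
          refine ⟨⟨hneg', ?_⟩, hlt'⟩
          have h1 : fbar f e' ≤ fbar f estar :=
            fbar_le_of_lt hlt_irrefl hlt_trans hlt_refine hestarG he'G hlt'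
          have h2 : persE G f hf lt estar ≤ δ := hpersstar
          simp only [persE] at h2 ⊢
          linarith
        exact hnotbelow ⟨y, hy, hr.mono hincl⟩
      push_neg at hcase
      have hpeq : f (compMin f (Gbelow G lt estar) a') = f u' := le_antisymm hple hcase
      have hpv : pairVert G f hf lt estar = u' := by
        rw [hcomp, if_neg (not_lt.mpr (hqlt.le.trans hcase))]
        exact hf (by rw [hpeq])
      exact absurd hpersstar (not_le.mpr (hup estar hnegstar hpv))
    have hbridge := reachable_sup_edge (hr₀.mono hleSup)
    rcases hbridge with h | ⟨h1, h2⟩ | ⟨h1, h2⟩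
    · exact hnotbelow ⟨y₀, hy₀, h⟩
    · exact key3 a b hab h1 h2
    · exact key3 b a (hab.trans Sym2.eq_swap) h1 h2
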